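/- Let g = [[A,B],[C,D]] ∈ SU(2,2) and Z ∈ T₊. Then CZ+D is invertible, so g·Z = (AZ+B)(CZ+D)⁻¹ is defined, and the imaginary part of g·Z satisfies (g·Z − (g·Z)*)/(2i) = ((CZ+D)*)⁻¹ · ((Z−Z*)/(2i)) · (CZ+D)⁻¹, which is positive definite; hence g·Z ∈ T₊, i.e. the action of SU(2,2) preserves the forward tube. -/

import Mathlib

open Matrix
open scoped ComplexOrder

/-- The 4×4 matrix `ζ` with 2×2 blocks `[[0, −i·1],[i·1, 0]]`. -/
noncomputable def zeta : Matrix (Fin 2 ⊕ Fin 2) (Fin 2 ⊕ Fin 2) ℂ :=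
  Matrix.fromBlocks 0 (-Complex.I • (1 : Matrix (Fin 2) (Fin 2) ℂ))
    (Complex.I • (1 : Matrix (Fin 2) (Fin 2) ℂ)) 0

/-- `SU(2,2)`: 4×4 complex matrices with `det g = 1` and `g ζ g* = ζ`. -/
noncomputable def SU22 : Set (Matrix (Fin 2 ⊕ Fin 2) (Fin 2 ⊕ Fin 2) ℂ) :=
  {g | g.det = 1 ∧ g * zeta * gᴴ = zeta}

/-- The forward tube `T₊`: matrices `Z` with positive definite imaginary part
`(Z − Z*)/(2i)`. -/
noncomputable def Tplus : Set (Matrix (Fin 2) (Fin 2) ℂ) :=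
  {Z | ((2 * Complex.I)⁻¹ • (Z - Zᴴ)).PosDef}

/-- For `g = [[A,B],[C,D]] ∈ SU(2,2)` and `Z ∈ T₊`: `CZ+D` is invertible, the imaginary
part of `g·Z = (AZ+B)(CZ+D)⁻¹` is `((CZ+D)*)⁻¹ ((Z−Z*)/(2i)) (CZ+D)⁻¹`, and `g·Z ∈ T₊`:
the action of `SU(2,2)` preserves the forward tube. -/
lemma zeta_mul_zeta : zeta * zeta = 1 := by
  simp [zeta, Matrix.fromBlocks_multiply, smul_smul, Complex.I_mul_I, ← Matrix.fromBlocks_one]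

lemma posDef_conj {M N : Matrix (Fin 2) (Fin 2) ℂ} (hM : M.PosDef)
    (hN : Function.Injective N.mulVec) : (Nᴴ * M * N).PosDef := by
  refine Matrix.PosDef.of_dotProduct_mulVec_pos ?_ ?_
  · exact Matrix.isHermitian_conjTranspose_mul_mul N hM.1
  · intro x hx
    have hNx : N *ᵥ x ≠ 0 := fun h => hx (hN (by simp [h]))
    have h := hM.dotProduct_mulVec_pos hNx
    rw [← Matrix.mulVec_mulVec, ← Matrix.mulVec_mulVec, Matrix.dotProduct_mulVec,
      ← Matrix.star_mulVec]
    exact h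

theorem su22_preserves_forward_tube (A B C D Z : Matrix (Fin 2) (Fin 2) ℂ)
    (hg : Matrix.fromBlocks A B C D ∈ SU22) (hZ : Z ∈ Tplus) :
    IsUnit (C * Z + D) ∧
    (2 * Complex.I)⁻¹ •
        ((A * Z + B) * (C * Z + D)⁻¹ - ((A * Z + B) * (C * Z + D)⁻¹)ᴴ)
      = ((C * Z + D)ᴴ)⁻¹ * ((2 * Complex.I)⁻¹ • (Z - Zᴴ)) * (C * Z + D)⁻¹ ∧
    (((C * Z + D)ᴴ)⁻¹ * ((2 * Complex.I)⁻¹ • (Z - Zᴴ)) * (C * Z + D)⁻¹).PosDef ∧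
    (A * Z + B) * (C * Z + D)⁻¹ ∈ Tplus := by
  obtain ⟨hdet, hzg⟩ := hg
  set g := Matrix.fromBlocks A B C D with hgdef
  set W := A * Z + B with hW
  set V := C * Z + D with hVdef
  -- g⁻¹ relations
  have hgu : IsUnit g.det := by rw [hdet]; exact isUnit_one
  have hinv : g⁻¹ * g = 1 := Matrix.nonsing_inv_mul g hgu
  have e1 : zeta * gᴴ = g⁻¹ * zeta := by
    calc zeta * gᴴ = g⁻¹ * (g * zeta * gᴴ) := by
          rw [← Matrix.mul_assoc, ← Matrix.mul_assoc, hinv, Matrix.one_mul]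
      _ = g⁻¹ * zeta := by rw [hzg]
  have hgH : gᴴ = zeta * (g⁻¹ * zeta) := by rw [← e1, ← Matrix.mul_assoc, zeta_mul_zeta, Matrix.one_mul]
  have h' : gᴴ * zeta * g = zeta := by
    calc gᴴ * zeta * g = zeta * (g⁻¹ * zeta) * zeta * g := by rw [hgH]
      _ = zeta * (g⁻¹ * (zeta * zeta * g)) := by simp only [Matrix.mul_assoc]
      _ = zeta * (g⁻¹ * g) := by rw [zeta_mul_zeta, Matrix.one_mul]
      _ = zeta := by rw [hinv, Matrix.mul_one]
  -- block relations
  rw [hgdef, Matrix.fromBlocks_conjTranspose] at h'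
  rw [show (zeta : Matrix (Fin 2 ⊕ Fin 2) (Fin 2 ⊕ Fin 2) ℂ) =
      Matrix.fromBlocks 0 (-Complex.I • (1 : Matrix (Fin 2) (Fin 2) ℂ))
        (Complex.I • (1 : Matrix (Fin 2) (Fin 2) ℂ)) 0 from rfl,
    Matrix.fromBlocks_multiply, Matrix.fromBlocks_multiply] at h'
  have h11 := congrArg Matrix.toBlocks₁₁ h'
  have h12 := congrArg Matrix.toBlocks₁₂ h'
  have h21 := congrArg Matrix.toBlocks₂₁ h'
  have h22 := congrArg Matrix.toBlocks₂₂ h'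
  simp only [Matrix.toBlocks_fromBlocks₁₁, Matrix.toBlocks_fromBlocks₁₂,
    Matrix.toBlocks_fromBlocks₂₁, Matrix.toBlocks_fromBlocks₂₂] at h11 h12 h21 h22
  have hIne : (Complex.I : ℂ) ≠ 0 := Complex.I_ne_zero
  have r1 : Cᴴ * A - Aᴴ * C = 0 := by
    have : Complex.I • (Cᴴ * A - Aᴴ * C) = 0 := by
      rw [smul_sub]
      simpa [Matrix.mul_smul, Matrix.smul_mul, mul_comm, sub_eq_add_neg] using h11
    simpa [hIne] using (smul_eq_zero.mp this)
  have r4 : Dᴴ * B - Bᴴ * D = 0 := by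
    have : Complex.I • (Dᴴ * B - Bᴴ * D) = 0 := by
      rw [smul_sub]
      simpa [Matrix.mul_smul, Matrix.smul_mul, sub_eq_add_neg] using h22
    simpa [hIne] using (smul_eq_zero.mp this)
  have r2 : Cᴴ * B - Aᴴ * D = -1 := by
    have h : Complex.I • (Cᴴ * B - Aᴴ * D) = Complex.I • (-1 : Matrix (Fin 2) (Fin 2) ℂ) := by
      rw [smul_sub]
      simpa [Matrix.mul_smul, Matrix.smul_mul, sub_eq_add_neg, smul_neg] using h12
    exact smul_right_injective _ hIne h
  have r3 : Dᴴ * A - Bᴴ * C = 1 := by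
    have h : Complex.I • (Dᴴ * A - Bᴴ * C) = Complex.I • (1 : Matrix (Fin 2) (Fin 2) ℂ) := by
      rw [smul_sub]
      simpa [Matrix.mul_smul, Matrix.smul_mul, sub_eq_add_neg] using h21
    exact smul_right_injective _ hIne h
  -- key identity
  have key : Vᴴ * W - Wᴴ * V = Z - Zᴴ := by
    have expand : Vᴴ * W - Wᴴ * V
        = Zᴴ * (Cᴴ * A - Aᴴ * C) * Z + Zᴴ * (Cᴴ * B - Aᴴ * D) + (Dᴴ * A - Bᴴ * C) * Z
          + (Dᴴ * B - Bᴴ * D) := by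
      rw [hW, hVdef]
      simp only [Matrix.conjTranspose_add, Matrix.conjTranspose_mul]
      noncomm_ring
    rw [expand, r1, r2, r3, r4]
    simp
    abel
  -- invertibility of V
  have hker : ∀ v, V *ᵥ v = 0 → v = 0 := by
    intro v hv
    by_contra h0
    have hpos := hZ.dotProduct_mulVec_pos h0
    have hzero : star v ⬝ᵥ ((2 * Complex.I)⁻¹ • (Z - Zᴴ)) *ᵥ v = 0 := by
      rw [Matrix.smul_mulVec, dotProduct_smul, ← key]
      rw [Matrix.sub_mulVec, ← Matrix.mulVec_mulVec, ← Matrix.mulVec_mulVec, hv,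
        Matrix.mulVec_zero]
      rw [dotProduct_sub, Matrix.dotProduct_mulVec, ← Matrix.star_mulVec, hv]
      simp
    rw [hzero] at hpos
    exact lt_irrefl 0 hpos
  have hV : IsUnit V := by
    rw [← Matrix.mulVec_injective_iff_isUnit]
    intro x y h
    have : V *ᵥ (x - y) = 0 := by rw [Matrix.mulVec_sub, h, sub_self]
    have := hker _ this
    exact sub_eq_zero.mp this
  have hVdet : IsUnit V.det := (Matrix.isUnit_iff_isUnit_det V).mp hV
  have hVHdet : IsUnit Vᴴ.det := by rw [Matrix.det_conjTranspose]; exact hVdet.star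
  have heq' : W * V⁻¹ - (W * V⁻¹)ᴴ = (Vᴴ)⁻¹ * (Z - Zᴴ) * V⁻¹ := by
    rw [← key, Matrix.conjTranspose_mul, Matrix.conjTranspose_nonsing_inv]
    have expand2 : (Vᴴ)⁻¹ * (Vᴴ * W - Wᴴ * V) * V⁻¹
        = (Vᴴ)⁻¹ * Vᴴ * (W * V⁻¹) - (Vᴴ)⁻¹ * Wᴴ * (V * V⁻¹) := by noncomm_ring
    rw [expand2, Matrix.nonsing_inv_mul _ hVHdet, Matrix.mul_nonsing_inv _ hVdet,
      Matrix.one_mul, Matrix.mul_one]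
  have heq : (2 * Complex.I)⁻¹ • (W * V⁻¹ - (W * V⁻¹)ᴴ)
      = (Vᴴ)⁻¹ * ((2 * Complex.I)⁻¹ • (Z - Zᴴ)) * V⁻¹ := by
    rw [Matrix.mul_smul, Matrix.smul_mul, heq']
  have hVinv : IsUnit V⁻¹ := Matrix.isUnit_nonsing_inv_iff.mpr hV
  have hpos : ((Vᴴ)⁻¹ * ((2 * Complex.I)⁻¹ • (Z - Zᴴ)) * V⁻¹).PosDef := by
    rw [← Matrix.conjTranspose_nonsing_inv]
    exact posDef_conj hZ (Matrix.mulVec_injective_iff_isUnit.mpr hVinv)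
  refine ⟨hV, heq, hpos, ?_⟩
  show ((2 * Complex.I)⁻¹ • (W * V⁻¹ - (W * V⁻¹)ᴴ)).PosDef
  rw [heq]
  exact hpos
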